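/- For real numbers a, b, c, d let F(x,y) = a·x³ + b·x²y + c·xy² + d·y³, and define M(F) = sup { F(x,y)² : x² + y² = 1 } and I(F) = (1/(2π))·∫₀^{2π} F(cos θ, sin θ)² dθ. Then for every such F: (2 − 2√6/9)·I(F) ≤ M(F) ≤ 4·I(F). Moreover both constants are optimal: M(F) = 4·I(F) holds for F(x,y) = x³ − xy², and M(F) = (2 − 2√6/9)·I(F) holds for F(x,y) = (3√6 − 2)·x³ + (12 − 3√6)·xy² + 2√5·y³. Equivalently, for the space of 4-homogeneous vector fields (yF, −xF) on the unit circle, the extremal ratios of squared maximal length to mean squared length are Υ(2,4) = 4 and Ξ(2,4) = 2 − 2√6/9. -/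

import Mathlib

set_option maxHeartbeats 1000000

open MeasureTheory


open Real intervalIntegral

lemma int_one_ : ∫ _ in (0:ℝ)..(2*π), (1:ℝ) = 2*π := by simp

lemma int_c2 : ∫ θ in (0:ℝ)..(2*π), Real.cos θ ^ 2 = π := by
  rw [integral_cos_sq]; simp [Real.sin_two_pi, Real.cos_two_pi]

lemma int_c4 : ∫ θ in (0:ℝ)..(2*π), Real.cos θ ^ 4 = 3*π/4 := by
  have h := integral_cos_pow (a:=0) (b:=2*π) 2
  norm_num [Real.sin_two_pi, Real.cos_two_pi, int_c2] at h
  rw [h]; ring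

lemma int_c6 : ∫ θ in (0:ℝ)..(2*π), Real.cos θ ^ 6 = 5*π/8 := by
  have h := integral_cos_pow (a:=0) (b:=2*π) 4
  norm_num [Real.sin_two_pi, Real.cos_two_pi, int_c4] at h
  rw [h]; ring

lemma int_sc (n : ℕ) : ∫ θ in (0:ℝ)..(2*π), Real.sin θ * Real.cos θ ^ (2*n+1) = 0 := by
  have h := integral_sin_pow_mul_cos_pow_odd (a:=0) (b:=2*π) 1 n
  simpa [Real.sin_two_pi, Real.sin_zero] using h

lemma int_sc1 : ∫ θ in (0:ℝ)..(2*π), Real.sin θ * Real.cos θ = 0 := by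
  simpa using int_sc 0

lemma int_sc3 : ∫ θ in (0:ℝ)..(2*π), Real.sin θ * Real.cos θ ^ 3 = 0 := by
  simpa using int_sc 1

lemma int_sc5 : ∫ θ in (0:ℝ)..(2*π), Real.sin θ * Real.cos θ ^ 5 = 0 := by
  simpa using int_sc 2

lemma int_main (a b c d : ℝ) :
    ∫ θ in (0:ℝ)..(2*π), (a * Real.cos θ ^ 3 + b * Real.cos θ ^ 2 * Real.sin θ
      + c * Real.cos θ * Real.sin θ ^ 2 + d * Real.sin θ ^ 3) ^ 2
    = π * (5*a^2+b^2+c^2+5*d^2+2*a*c+2*b*d) / 8 := by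
  have ii : ∀ f : ℝ → ℝ, Continuous f → IntervalIntegrable f MeasureTheory.volume 0 (2*π) :=
    fun f h => h.intervalIntegrable 0 (2*π)
  have key : ∀ θ : ℝ, (a * Real.cos θ ^ 3 + b * Real.cos θ ^ 2 * Real.sin θ
      + c * Real.cos θ * Real.sin θ ^ 2 + d * Real.sin θ ^ 3) ^ 2
      = (d^2 * (1:ℝ) + ((c^2+2*b*d-3*d^2) * Real.cos θ^2
        + ((b^2+2*a*c-2*(c^2+2*b*d)+3*d^2) * Real.cos θ^4
        + (a^2-(b^2+2*a*c)+(c^2+2*b*d)-d^2) * Real.cos θ^6)))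
        + ((2*c*d) * (Real.sin θ * Real.cos θ)
        + ((2*a*d+2*b*c-4*c*d) * (Real.sin θ * Real.cos θ^3)
        + (2*a*b-2*a*d-2*b*c+2*c*d) * (Real.sin θ * Real.cos θ^5))) := by
    intro θ
    have h := Real.sin_sq_add_cos_sq θ
    set C := Real.cos θ
    set S := Real.sin θ
    linear_combination (d^2 + S^2*d^2 + S^4*d^2 + 2*C*S*c*d + 2*C*S^3*c*d - 2*C^2*d^2
      + C^2*c^2 + 2*C^2*b*d - C^2*S^2*d^2 + C^2*S^2*c^2 + 2*C^2*S^2*b*d - 2*C^3*S*c*d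
      + 2*C^3*S*b*c + 2*C^3*S*a*d + C^4*d^2 - C^4*c^2 - 2*C^4*b*d + C^4*b^2 + 2*C^4*a*c) * h
  simp only [key]
  rw [intervalIntegral.integral_add (ii _ (by fun_prop)) (ii _ (by fun_prop)),
      intervalIntegral.integral_add (ii _ (by fun_prop)) (ii _ (by fun_prop)),
      intervalIntegral.integral_add (ii _ (by fun_prop)) (ii _ (by fun_prop)),
      intervalIntegral.integral_add (ii _ (by fun_prop)) (ii _ (by fun_prop)),
      intervalIntegral.integral_add (ii _ (by fun_prop)) (ii _ (by fun_prop)),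
      intervalIntegral.integral_add (ii _ (by fun_prop)) (ii _ (by fun_prop)),
      intervalIntegral.integral_const_mul, intervalIntegral.integral_const_mul,
      intervalIntegral.integral_const_mul, intervalIntegral.integral_const_mul,
      intervalIntegral.integral_const_mul, intervalIntegral.integral_const_mul,
      intervalIntegral.integral_const_mul,
      int_one_, int_c2, int_c4, int_c6, int_sc1, int_sc3, int_sc5]
  ring


lemma pointwise_upper (a b c d x y : ℝ) (h : x^2+y^2 = 1) :
    (a*x^3+b*x^2*y+c*x*y^2+d*y^3)^2 ≤ (5*a^2+b^2+c^2+5*d^2+2*a*c+2*b*d)/4 := by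
  set p := (3*a+c)/4 with hp
  set q := (b+3*d)/4 with hq
  set r := (a-c)/4 with hr
  set s := (b-d)/4 with hs
  have hF : a*x^3+b*x^2*y+c*x*y^2+d*y^3
      = (p*x+q*y) + (r*(4*x^3-3*x)+s*(3*y-4*y^3)) := by
    rw [hp, hq, hr, hs]; linear_combination (c*x+b*y)*h
  have h3 : (4*x^3-3*x)^2 + (3*y-4*y^3)^2 = 1 := by
    linear_combination (1-8*y^2+16*y^4-8*x^2-16*x^2*y^2+16*x^4)*h
  have hU : (p*x+q*y)^2 ≤ p^2+q^2 := by nlinarith [sq_nonneg (p*y-q*x)]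
  have hV : (r*(4*x^3-3*x)+s*(3*y-4*y^3))^2 ≤ r^2+s^2 := by
    nlinarith [sq_nonneg (r*(3*y-4*y^3)-s*(4*x^3-3*x))]
  have h2 : (a*x^3+b*x^2*y+c*x*y^2+d*y^3)^2
      ≤ 2*(p*x+q*y)^2 + 2*(r*(4*x^3-3*x)+s*(3*y-4*y^3))^2 := by
    rw [hF]; nlinarith [sq_nonneg ((p*x+q*y) - (r*(4*x^3-3*x)+s*(3*y-4*y^3)))]
  have hN : 2*(p^2+q^2) + 2*(r^2+s^2) = (5*a^2+b^2+c^2+5*d^2+2*a*c+2*b*d)/4 := by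
    rw [hp, hq, hr, hs]; ring
  linarith


lemma sharp_cubic (s6 A B : ℝ) (h6 : s6^2 = 6) (h6l : (2.44:ℝ) ≤ s6)
    (hA : 0 ≤ A) (hB : 0 ≤ B) :
    (27 - 3*s6) * B * (A^2+B^2) ≤ (A+3*B)^3 := by
  have key : 18*((A+3*B)^3 - (27-3*s6)*B*(A^2+B^2))
      = s6*(3*B-(3-s6)*A)^2*(6*B+(5*s6+12)*A) := by
    linear_combination (-81*A*B^2 + 54*A^2*B - 36*A^2*B*s6 - 3*A^3 + 18*A^3*s6 - 5*A^3*s6^2) * h6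
  have hs0 : 0 ≤ s6 := by linarith
  have h1 : 0 ≤ s6*(3*B-(3-s6)*A)^2*(6*B+(5*s6+12)*A) := by
    apply mul_nonneg (mul_nonneg hs0 (sq_nonneg _))
    nlinarith [hs0, hA, hB]
  linarith [key, h1]

lemma branch5 (s6 A B v x y : ℝ) (h6 : s6^2 = 6) (h6l : (2.44:ℝ) ≤ s6) (h6u : s6 ≤ 2.45)
    (hA : 0 ≤ A) (hB : 0 < B) (hv : 0 ≤ v)
    (hx2 : 12*B*x^2 = A+3*B) (hy2 : 12*B*y^2 = 9*B-A) (hx0 : 0 ≤ x) (hy0 : 0 ≤ y)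
    (hBA : 36*B ≤ (27-4*s6)*A) (hvA : 36*v ≤ (27-4*s6)*A) (hA6 : A ≤ 6*B) :
    (1-s6/9)*(A^2+B^2+v^2) ≤ ((2/3)*(A+3*B)*x + v*(y*(4*x^2-1)))^2 := by
  have hx2q : 1/4 ≤ x^2 := by nlinarith [hB, hA]
  have hy2q : 1/4 ≤ y^2 := by nlinarith [hB, hA6]
  have hxh : 1/2 ≤ x := by nlinarith [hx2q, hx0]
  have hyh : 1/2 ≤ y := by nlinarith [hy2q, hy0]
  have hxy : 1/4 ≤ x*y := by nlinarith [hxh, hyh]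
  have hAB0 : 0 ≤ A*B := mul_nonneg hA hB.le
  have hs0 : (0:ℝ) ≤ s6 := by linarith
  have wpos : (0:ℝ) ≤ 81-9*s6 := by nlinarith
  have tpos : (0:ℝ) < 27-4*s6 := by nlinarith
  have h81 : (0:ℝ) < 81*B^2 := by positivity
  rw [← mul_le_mul_iff_right₀ h81]
  have hVexp : 81*B^2 * (((2/3)*(A+3*B)*x + v*(y*(4*x^2-1)))^2)
      = (6*B*(A+3*B)*x + 3*A*v*y)^2 := by
    have h9 : 9*B*((2/3)*(A+3*B)*x + v*(y*(4*x^2-1))) = 6*B*(A+3*B)*x + 3*A*v*y := by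
      linear_combination (3*v*y) * hx2
    calc 81*B^2 * (((2/3)*(A+3*B)*x + v*(y*(4*x^2-1)))^2)
        = (9*B*((2/3)*(A+3*B)*x + v*(y*(4*x^2-1))))^2 := by ring
      _ = (6*B*(A+3*B)*x + 3*A*v*y)^2 := by rw [h9]
  rw [hVexp]
  -- piece 1
  have hsharp := sharp_cubic s6 A B h6 h6l hA hB.le
  have e36 : 36*B^2*(A+3*B)^2*x^2 = 3*B*(A+3*B)^3 := by
    linear_combination (3*(A+3*B)^2*B) * hx2
  have pc : (81-9*s6)*B^2*(A^2+B^2) ≤ 36*B^2*(A+3*B)^2*x^2 := by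
    rw [e36]
    linarith [mul_le_mul_of_nonneg_left hsharp (show (0:ℝ) ≤ 3*B by linarith)]
  -- piece 2 : cross term
  have sa : (0:ℝ) ≤ 11664+972*(27-4*s6) - (27-4*s6)^2*(81-9*s6) := by nlinarith [h6, h6l]
  have f1 : (0:ℝ) ≤ (27-4*s6)*(81-9*s6)*B^2*((27-4*s6)*A - 36*v) :=
    mul_nonneg (mul_nonneg (mul_nonneg tpos.le wpos) (sq_nonneg B)) (by linarith)
  have f2 : (0:ℝ) ≤ 324*(A*B)*((27-4*s6)*A - 36*B) :=
    mul_nonneg (by linarith) (by linarith)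
  have f3 : (0:ℝ) ≤ A*B^2*(11664+972*(27-4*s6) - (27-4*s6)^2*(81-9*s6)) :=
    mul_nonneg (mul_nonneg hA (sq_nonneg B)) sa
  have key2m : 36*(27-4*s6)*((81-9*s6)*B^2*v) ≤ 36*(27-4*s6)*(9*A*B*(A+3*B)) := by
    linarith [f1, f2, f3]
  have key2 : (81-9*s6)*B^2*v ≤ 9*A*B*(A+3*B) := by
    have h36t : (0:ℝ) < 36*(27-4*s6) := by linarith
    exact le_of_mul_le_mul_left key2m h36t
  have cross : (81-9*s6)*B^2*v^2 ≤ 36*A*B*(A+3*B)*(x*y)*v := by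
    have c1 : (81-9*s6)*B^2*v*v ≤ 9*A*B*(A+3*B)*v := mul_le_mul_of_nonneg_right key2 hv
    have c2 : 9*A*B*(A+3*B)*v ≤ 36*A*B*(A+3*B)*(x*y)*v := by
      linarith [mul_le_mul_of_nonneg_left hxy (mul_nonneg (mul_nonneg (mul_nonneg (by norm_num : (0:ℝ) ≤ 36) hAB0) (show (0:ℝ) ≤ A+3*B by linarith)) hv)]
    linarith [c1, c2]
  linarith [pc, cross, sq_nonneg (3*A*v*y)]


lemma core_aux (s6 A u v : ℝ) (h6 : s6^2 = 6) (h6l : (2.44:ℝ) ≤ s6) (h6u : s6 ≤ 2.45)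
    (hA : 0 ≤ A) (hv : 0 ≤ v) :
    ∃ φ : ℝ, (1-s6/9)*(A^2+u^2+v^2)
      ≤ (A*Real.cos φ + u*Real.cos (3*φ) + v*Real.sin (3*φ))^2 := by
  set h := Real.sqrt (u^2+v^2) with hhdef
  have hh2 : h^2 = u^2+v^2 := Real.sq_sqrt (by positivity)
  have hh0 : 0 ≤ h := Real.sqrt_nonneg _
  by_cases hz : u^2+v^2 = 0
  · -- trivial branch
    have hu : u = 0 := by nlinarith [sq_nonneg u, sq_nonneg v]
    have hv0 : v = 0 := by nlinarith [sq_nonneg u, sq_nonneg v]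
    refine ⟨0, ?_⟩
    rw [hu, hv0]
    simp [Real.cos_zero, Real.sin_zero]
    nlinarith [sq_nonneg A, h6l]
  · have hhpos : 0 < h := Real.sqrt_pos.mpr (lt_of_le_of_ne (by positivity) (Ne.symm hz))
    by_cases hc2 : (1-s6/9)*(A^2+(u^2+v^2)) ≤ (A/2+h)^2
    · -- branch C2 : third-harmonic-first
      set z : ℂ := ⟨u, v⟩ with hzdef
      have hz0 : z ≠ 0 := by
        intro h0
        apply hz
        have hu : u = 0 := congrArg Complex.re h0
        have hv' : v = 0 := congrArg Complex.im h0
        rw [hu, hv']; ring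
      have habs : ‖z‖ = h := by
        rw [Complex.norm_def, Complex.normSq_mk, hhdef]
        norm_num [pow_two]
      refine ⟨z.arg / 3, ?_⟩
      have h3 : 3 * (z.arg/3) = z.arg := by ring
      rw [h3, Complex.cos_arg hz0, Complex.sin_arg, habs]
      have hre : z.re = u := rfl
      have him : z.im = v := rfl
      rw [hre, him]
      have hsum : u*(u/h) + v*(v/h) = h := by
        field_simp
        linarith [hh2]
      have hcos : (1/2:ℝ) ≤ Real.cos (z.arg/3) := by
        have harg : |z.arg| ≤ Real.pi := Complex.abs_arg_le_pi z
        have h13 : |z.arg/3| ≤ Real.pi/3 := by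
          rw [abs_div, abs_of_pos (by norm_num : (0:ℝ) < 3)]
          have : 0 < Real.pi := Real.pi_pos
          linarith
        have hmono := Real.cos_le_cos_of_nonneg_of_le_pi (abs_nonneg (z.arg/3))
          (by linarith [Real.pi_pos] : Real.pi/3 ≤ Real.pi) h13
        rw [Real.cos_pi_div_three, Real.cos_abs] at hmono
        exact hmono
      have hval : A/2 + h ≤ A*Real.cos (z.arg/3) + (u*(u/h) + v*(v/h)) := by
        rw [hsum]
        have := mul_le_mul_of_nonneg_left hcos hA
        linarith
      have hval0 : 0 ≤ A/2 + h := by linarith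
      calc (1-s6/9)*(A^2+u^2+v^2) = (1-s6/9)*(A^2+(u^2+v^2)) := by ring
        _ ≤ (A/2+h)^2 := hc2
        _ ≤ (A*Real.cos (z.arg/3) + (u*(u/h) + v*(v/h)))^2 := by
            have := pow_le_pow_left₀ hval0 hval 2
            linarith [this]
        _ = (A*Real.cos (z.arg/3) + u*(u/h) + v*(v/h))^2 := by ring
    · -- not C2
      push_neg at hc2
      have hApos : 0 < A := by
        rcases hA.lt_or_eq with h' | h'
        · exact h'
        · exfalso
          rw [← h'] at hc2
          have : u^2+v^2 ≤ 0 := by nlinarith [hh2, h6l]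
          exact hz (le_antisymm this (by positivity))
      have hhA : 36*h ≤ (27-4*s6)*A := by
        nlinarith [hc2, hh2, hApos, hhpos, h6l, mul_pos hApos hhpos]
      by_cases hu0 : 0 ≤ u
      · -- branch 4 : φ = 0
        refine ⟨0, ?_⟩
        simp [Real.cos_zero, Real.sin_zero]
        have hsq : 1296*h^2 ≤ ((27-4*s6)*A)^2 := by
          nlinarith [hhA, hh0, hApos, h6l]
        nlinarith [hsq, hh2, mul_nonneg hA hu0, h6, h6l, h6u, sq_nonneg A]
      · -- u < 0
        push_neg at hu0
        by_cases hc1 : (1-s6/9)*(A^2+u^2+v^2) ≤ (Real.sqrt 3/2*A + v)^2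
        · refine ⟨Real.pi/6, ?_⟩
          rw [show 3*(Real.pi/6) = Real.pi/2 by ring, Real.cos_pi_div_two,
            Real.sin_pi_div_two, Real.cos_pi_div_six]
          calc (1-s6/9)*(A^2+u^2+v^2) ≤ (Real.sqrt 3/2*A + v)^2 := hc1
            _ = (A*(Real.sqrt 3/2) + u*0 + v*1)^2 := by ring
        · push_neg at hc1
          set B := -u with hBdef
          have hBpos : 0 < B := by simp [hBdef]; linarith
          have hBh : B ≤ h := by nlinarith [hh2, hh0, hBpos]
          have hvh : v ≤ h := by nlinarith [hh2, hh0, hv]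
          have hBA : 36*B ≤ (27-4*s6)*A := by linarith
          have hvA : 36*v ≤ (27-4*s6)*A := by linarith
          have hs3 : (Real.sqrt 3)^2 = 3 := Real.sq_sqrt (by norm_num)
          have hs30 : 0 ≤ Real.sqrt 3 := Real.sqrt_nonneg 3
          have hA6 : A ≤ 6*B := by
            nlinarith [hc1, hs3, hs30, mul_nonneg hA hv, h6, h6l, h6u, sq_nonneg v,
              mul_nonneg (mul_nonneg hs30 hA) hv, hBpos, sq_nonneg (A-6*B), sq_nonneg (A+6*B)]
          -- set up the point
          set x := Real.sqrt ((A+3*B)/(12*B)) with hxdef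
          set y := Real.sqrt ((9*B-A)/(12*B)) with hydef
          have hx0 : 0 ≤ x := Real.sqrt_nonneg _
          have hy0 : 0 ≤ y := Real.sqrt_nonneg _
          have hx2 : 12*B*x^2 = A+3*B := by
            rw [hxdef, Real.sq_sqrt (by positivity)]
            field_simp
          have hy2 : 12*B*y^2 = 9*B-A := by
            rw [hydef, Real.sq_sqrt (div_nonneg (by linarith) (by linarith))]
            field_simp
          have hxy1 : x^2 + y^2 = 1 := by
            have h12 : (12*B) * (x^2+y^2) = (12*B) * 1 := by
              linear_combination hx2 + hy2
            exact mul_left_cancel₀ (by positivity) h12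
          have hx1 : x ≤ 1 := by nlinarith [hxy1, sq_nonneg y, hx0]
          have hxm1 : (-1:ℝ) ≤ x := by linarith
          refine ⟨Real.arccos x, ?_⟩
          rw [Real.cos_three_mul, Real.sin_three_mul, Real.cos_arccos hxm1 hx1,
            Real.sin_arccos]
          have hsy : Real.sqrt (1 - x^2) = y := by
            rw [show 1 - x^2 = y^2 by linarith [hxy1], Real.sqrt_sq hy0]
          rw [hsy]
          have hident : A*x + u*(4*x^3-3*x) + v*(3*y-4*y^3)
              = (2/3)*(A+3*B)*x + v*(y*(4*x^2-1)) := by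
            rw [hBdef]
            linear_combination (-(1/3)*x)*hx2 + (-4*v*y)*hxy1
          rw [hident]
          have := branch5 s6 A B v x y h6 h6l h6u hA hBpos hv hx2 hy2 hx0 hy0 hBA hvA hA6
          · linarith [this]


lemma core (s6 A u v : ℝ) (h6 : s6^2 = 6) (h6l : (2.44:ℝ) ≤ s6) (h6u : s6 ≤ 2.45)
    (hA : 0 ≤ A) :
    ∃ φ : ℝ, (1-s6/9)*(A^2+u^2+v^2)
      ≤ (A*Real.cos φ + u*Real.cos (3*φ) + v*Real.sin (3*φ))^2 := by
  rcases le_or_gt 0 v with hv | hv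
  · exact core_aux s6 A u v h6 h6l h6u hA hv
  · obtain ⟨φ, hφ⟩ := core_aux s6 A u (-v) h6 h6l h6u hA (by linarith)
    refine ⟨-φ, ?_⟩
    rw [Real.cos_neg, show 3*(-φ) = -(3*φ) by ring, Real.cos_neg, Real.sin_neg]
    calc (1-s6/9)*(A^2+u^2+v^2) = (1-s6/9)*(A^2+u^2+(-v)^2) := by ring
      _ ≤ (A*Real.cos φ + u*Real.cos (3*φ) + (-v)*Real.sin (3*φ))^2 := hφ
      _ = (A*Real.cos φ + u*Real.cos (3*φ) + v*(-Real.sin (3*φ)))^2 := by ring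

lemma exists_point (s6 a b c d : ℝ) (h6 : s6^2 = 6) (h6l : (2.44:ℝ) ≤ s6) (h6u : s6 ≤ 2.45) :
    ∃ X Y : ℝ, X^2+Y^2 = 1 ∧
      (2-2*s6/9)*((5*a^2+b^2+c^2+5*d^2+2*a*c+2*b*d)/16)
        ≤ (a*X^3+b*X^2*Y+c*X*Y^2+d*Y^3)^2 := by
  set p := (3*a+c)/4 with hp
  set q := (b+3*d)/4 with hq
  set r := (a-c)/4 with hr
  set s := (b-d)/4 with hs
  have hNid : (2-2*s6/9)*((5*a^2+b^2+c^2+5*d^2+2*a*c+2*b*d)/16)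
      = (1-s6/9)*(p^2+q^2+r^2+s^2) + (1-s6/9)*((p^2+q^2) - (Real.sqrt (p^2+q^2))^2) := by
    rw [Real.sq_sqrt (by positivity), hp, hq, hr, hs]; ring
  -- general identity for F on the circle
  have hFrep : ∀ θ : ℝ, a*(Real.cos θ)^3 + b*(Real.cos θ)^2*(Real.sin θ)
      + c*(Real.cos θ)*(Real.sin θ)^2 + d*(Real.sin θ)^3
      = p*Real.cos θ + q*Real.sin θ + r*Real.cos (3*θ) + s*Real.sin (3*θ) := by
    intro θ
    rw [Real.cos_three_mul, Real.sin_three_mul, hp, hq, hr, hs]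
    linear_combination (c*Real.cos θ + b*Real.sin θ) * (Real.sin_sq_add_cos_sq θ)
  by_cases hpq : p^2+q^2 = 0
  · -- no first harmonic
    have hp0 : p = 0 := by nlinarith [sq_nonneg p, sq_nonneg q]
    have hq0 : q = 0 := by nlinarith [sq_nonneg p, sq_nonneg q]
    obtain ⟨φ, hφ⟩ := core s6 0 r s h6 h6l h6u le_rfl
    refine ⟨Real.cos φ, Real.sin φ, Real.cos_sq_add_sin_sq φ, ?_⟩
    have hF := hFrep φ
    rw [hp0, hq0] at hF
    calc (2-2*s6/9)*((5*a^2+b^2+c^2+5*d^2+2*a*c+2*b*d)/16)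
        = (1-s6/9)*(0^2+r^2+s^2) := by
          rw [hNid, hp0, hq0]
          have : Real.sqrt (0^2+0^2) = 0 := by simp
          rw [this]; ring
      _ ≤ (0*Real.cos φ + r*Real.cos (3*φ) + s*Real.sin (3*φ))^2 := hφ
      _ = (a*(Real.cos φ)^3 + b*(Real.cos φ)^2*(Real.sin φ)
          + c*(Real.cos φ)*(Real.sin φ)^2 + d*(Real.sin φ)^3)^2 := by
          rw [hF]; ring
  · -- general case
    set z : ℂ := ⟨p, q⟩ with hzdef
    have hz0 : z ≠ 0 := by
      intro h0
      apply hpq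
      have h1 : p = 0 := congrArg Complex.re h0
      have h2 : q = 0 := congrArg Complex.im h0
      rw [h1, h2]; ring
    set A := Real.sqrt (p^2+q^2) with hAdef
    have hA2 : A^2 = p^2+q^2 := Real.sq_sqrt (by positivity)
    have hApos : 0 < A := Real.sqrt_pos.mpr (lt_of_le_of_ne (by positivity) (Ne.symm hpq))
    have habs : ‖z‖ = A := by
      rw [Complex.norm_def, Complex.normSq_mk, hAdef]
      norm_num [pow_two]
    set α := z.arg with hα
    have hcosα : Real.cos α = p/A := by
      rw [hα, Complex.cos_arg hz0, habs]
    have hsinα : Real.sin α = q/A := by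
      rw [hα, Complex.sin_arg, habs]
    set u := r*Real.cos (3*α) + s*Real.sin (3*α) with hu
    set v := s*Real.cos (3*α) - r*Real.sin (3*α) with hv
    have huv : u^2+v^2 = r^2+s^2 := by
      rw [hu, hv]
      linear_combination (r^2+s^2) * (Real.sin_sq_add_cos_sq (3*α))
    obtain ⟨φ, hφ⟩ := core s6 A u v h6 h6l h6u hApos.le
    refine ⟨Real.cos (α+φ), Real.sin (α+φ), Real.cos_sq_add_sin_sq _, ?_⟩
    have hF := hFrep (α+φ)
    have hcos3 : Real.cos (3*(α+φ)) = Real.cos (3*α) * Real.cos (3*φ) - Real.sin (3*α) * Real.sin (3*φ) := by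
      rw [show 3*(α+φ) = 3*α + 3*φ by ring, Real.cos_add]
    have hsin3 : Real.sin (3*(α+φ)) = Real.sin (3*α) * Real.cos (3*φ) + Real.cos (3*α) * Real.sin (3*φ) := by
      rw [show 3*(α+φ) = 3*α + 3*φ by ring, Real.sin_add]
    have hpA : p = A*Real.cos α := by rw [hcosα]; field_simp
    have hqA : q = A*Real.sin α := by rw [hsinα]; field_simp
    have hval : p*Real.cos (α+φ) + q*Real.sin (α+φ) + r*Real.cos (3*(α+φ)) + s*Real.sin (3*(α+φ))
        = A*Real.cos φ + u*Real.cos (3*φ) + v*Real.sin (3*φ) := by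
      rw [Real.cos_add, Real.sin_add, hcos3, hsin3, hu, hv, hpA, hqA]
      linear_combination (A*Real.cos φ) * (Real.sin_sq_add_cos_sq α)
    calc (2-2*s6/9)*((5*a^2+b^2+c^2+5*d^2+2*a*c+2*b*d)/16)
        = (1-s6/9)*(A^2+u^2+v^2) := by
          rw [hNid]
          linear_combination (s6/9-1)*huv + (2*(s6/9)-2)*hA2
      _ ≤ (A*Real.cos φ + u*Real.cos (3*φ) + v*Real.sin (3*φ))^2 := hφ
      _ = (a*(Real.cos (α+φ))^3 + b*(Real.cos (α+φ))^2*(Real.sin (α+φ))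
          + c*(Real.cos (α+φ))*(Real.sin (α+φ))^2 + d*(Real.sin (α+φ))^3)^2 := by
          rw [hF, hval]


lemma pointwise_Fstar (s5 s6 x y : ℝ) (h5 : s5^2 = 5) (h6 : s6^2 = 6) (h6u : s6 ≤ 2.45)
    (h : x^2+y^2 = 1) :
    ((3*s6-2)*x^3 + (12-3*s6)*x*y^2 + 2*s5*y^3)^2 ≤ 58-12*s6 := by
  have key : 841*((58-12*s6)*(x^2+y^2)^3 - ((3*s6-2)*x^3 + (12-3*s6)*x*y^2 + 2*s5*y^3)^2)
      = (38-12*s6)*((y*(y-s5*x)*(29*y-(3*s6-5)*s5*x))^2 + (736-24*s6)*(x*y*(y-s5*x))^2) := by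
    linear_combination (-2088*x*y^5*s5 - 7857*x^2*y^4 + 3474*x^2*y^4*s5^2 + 108*x^2*y^4*s5^2*s6
      + 576*x^3*y^3*s5 - 684*x^3*y^3*s5^3 - 216*x^3*y^3*s5^3*s6 + 15138*x^4*y^2
      - 288*x^4*y^2*s5^2 - 702*x^4*y^2*s5^4 + 108*x^4*y^2*s5^4*s6 - 7569*x^6) * h6
      + (-3364*y^6 + 9976*x^2*y^4 - 8004*x^2*y^4*s6 - 13224*x^3*y^3*s5 + 5916*x^3*y^3*s5*s6
      - 55506*x^4*y^2 + 20184*x^4*y^2*s6 - 5162*x^4*y^2*s5^2 + 2088*x^4*y^2*s5^2*s6) * h5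
  have hpos : 0 ≤ (38-12*s6)*((y*(y-s5*x)*(29*y-(3*s6-5)*s5*x))^2 + (736-24*s6)*(x*y*(y-s5*x))^2) := by
    apply mul_nonneg (by linarith)
    exact add_nonneg (sq_nonneg _) (mul_nonneg (by linarith) (sq_nonneg _))
  rw [h] at key
  norm_num at key
  linarith [key, hpos]


/-- for cubic forms `F = ax³ + bx²y + cxy² + dy³`, the maximum
`M(F)` of `F²` on the unit circle and its mean value `I(F)` satisfy
`(2 − 2√6/9)·I(F) ≤ M(F) ≤ 4·I(F)`, with both constants attained — by
`F = x³ − xy²` and `F = (3√6−2)x³ + (12−3√6)xy² + 2√5y³` respectively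
(`Υ(2,4) = 4`, `Ξ(2,4) = 2 − 2√6/9`). -/
theorem stmt_18
    (M I : ℝ → ℝ → ℝ → ℝ → ℝ)
    (hM : ∀ a b c d : ℝ, M a b c d =
      sSup {v : ℝ | ∃ x y : ℝ, x ^ 2 + y ^ 2 = 1 ∧
        v = (a * x ^ 3 + b * x ^ 2 * y + c * x * y ^ 2 + d * y ^ 3) ^ 2})
    (hI : ∀ a b c d : ℝ, I a b c d =
      (1 / (2 * Real.pi)) * ∫ θ in (0 : ℝ)..(2 * Real.pi),
        (a * Real.cos θ ^ 3 + b * Real.cos θ ^ 2 * Real.sin θ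
          + c * Real.cos θ * Real.sin θ ^ 2 + d * Real.sin θ ^ 3) ^ 2) :
    (∀ a b c d : ℝ,
      (2 - 2 * Real.sqrt 6 / 9) * I a b c d ≤ M a b c d ∧
        M a b c d ≤ 4 * I a b c d) ∧
    M 1 0 (-1) 0 = 4 * I 1 0 (-1) 0 ∧
    M (3 * Real.sqrt 6 - 2) 0 (12 - 3 * Real.sqrt 6) (2 * Real.sqrt 5)
      = (2 - 2 * Real.sqrt 6 / 9)
        * I (3 * Real.sqrt 6 - 2) 0 (12 - 3 * Real.sqrt 6) (2 * Real.sqrt 5) := by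
  have hpi : (0:ℝ) < Real.pi := Real.pi_pos
  have h6 : (Real.sqrt 6)^2 = 6 := Real.sq_sqrt (by norm_num)
  have h60 : (0:ℝ) ≤ Real.sqrt 6 := Real.sqrt_nonneg 6
  have h6l : (2.44:ℝ) ≤ Real.sqrt 6 := by nlinarith [h6, h60]
  have h6u : Real.sqrt 6 ≤ 2.45 := by nlinarith [h6, h60]
  have hIval : ∀ a b c d : ℝ, I a b c d
      = (5*a^2+b^2+c^2+5*d^2+2*a*c+2*b*d)/16 := by
    intro a b c d
    rw [hI, int_main]
    field_simp
    ring
  have hmem : ∀ a b c d X Y : ℝ, X^2+Y^2 = 1 →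
      (a * X ^ 3 + b * X ^ 2 * Y + c * X * Y ^ 2 + d * Y ^ 3) ^ 2 ∈
        {v : ℝ | ∃ x y : ℝ, x ^ 2 + y ^ 2 = 1 ∧
          v = (a * x ^ 3 + b * x ^ 2 * y + c * x * y ^ 2 + d * y ^ 3) ^ 2} :=
    fun a b c d X Y hXY => ⟨X, Y, hXY, rfl⟩
  have hBdd : ∀ a b c d : ℝ, BddAbove {v : ℝ | ∃ x y : ℝ, x ^ 2 + y ^ 2 = 1 ∧
      v = (a * x ^ 3 + b * x ^ 2 * y + c * x * y ^ 2 + d * y ^ 3) ^ 2} := by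
    intro a b c d
    refine ⟨(5*a^2+b^2+c^2+5*d^2+2*a*c+2*b*d)/4, ?_⟩
    rintro w ⟨X, Y, hXY, rfl⟩
    have := pointwise_upper a b c d X Y hXY
    calc (a * X ^ 3 + b * X ^ 2 * Y + c * X * Y ^ 2 + d * Y ^ 3) ^ 2
        = (a*X^3+b*X^2*Y+c*X*Y^2+d*Y^3)^2 := by ring
      _ ≤ _ := this
  have hub : ∀ a b c d : ℝ, M a b c d ≤ 4 * I a b c d := by
    intro a b c d
    rw [hM, hIval]
    apply Real.sSup_le
    · rintro w ⟨X, Y, hXY, rfl⟩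
      have := pointwise_upper a b c d X Y hXY
      calc (a * X ^ 3 + b * X ^ 2 * Y + c * X * Y ^ 2 + d * Y ^ 3) ^ 2
          = (a*X^3+b*X^2*Y+c*X*Y^2+d*Y^3)^2 := by ring
        _ ≤ (5*a^2+b^2+c^2+5*d^2+2*a*c+2*b*d)/4 := this
        _ = 4*((5*a^2+b^2+c^2+5*d^2+2*a*c+2*b*d)/16) := by ring
    · have hN : (0:ℝ) ≤ 5*a^2+b^2+c^2+5*d^2+2*a*c+2*b*d := by
        nlinarith [sq_nonneg (a+c), sq_nonneg (b+d), sq_nonneg a, sq_nonneg d]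
      linarith
  have hlb : ∀ a b c d : ℝ, (2 - 2 * Real.sqrt 6 / 9) * I a b c d ≤ M a b c d := by
    intro a b c d
    rw [hM, hIval]
    obtain ⟨X, Y, hXY, hval⟩ := exists_point (Real.sqrt 6) a b c d h6 h6l h6u
    calc (2 - 2 * Real.sqrt 6 / 9) * ((5*a^2+b^2+c^2+5*d^2+2*a*c+2*b*d)/16)
        = (2-2*Real.sqrt 6/9)*((5*a^2+b^2+c^2+5*d^2+2*a*c+2*b*d)/16) := by ring
      _ ≤ (a*X^3+b*X^2*Y+c*X*Y^2+d*Y^3)^2 := hval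
      _ = (a * X ^ 3 + b * X ^ 2 * Y + c * X * Y ^ 2 + d * Y ^ 3) ^ 2 := by ring
      _ ≤ _ := le_csSup (hBdd a b c d) (hmem a b c d X Y hXY)
  refine ⟨fun a b c d => ⟨hlb a b c d, hub a b c d⟩, ?_, ?_⟩
  · -- M(x³ - xy²) = 4 I
    have hIv : 4 * I 1 0 (-1) 0 = 1 := by rw [hIval]; norm_num
    rw [hM, hIv]
    apply le_antisymm
    · apply Real.sSup_le
      · rintro w ⟨X, Y, hXY, rfl⟩
        have h2 := pointwise_upper 1 0 (-1) 0 X Y hXY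
        calc ((1:ℝ) * X ^ 3 + 0 * X ^ 2 * Y + (-1) * X * Y ^ 2 + 0 * Y ^ 3) ^ 2
            = ((1:ℝ)*X^3+0*X^2*Y+(-1)*X*Y^2+0*Y^3)^2 := by ring
          _ ≤ (5*(1:ℝ)^2+0^2+(-1)^2+5*0^2+2*1*(-1)+2*0*0)/4 := h2
          _ = 1 := by norm_num
      · norm_num
    · have h1 : (1:ℝ) ∈ {v : ℝ | ∃ x y : ℝ, x ^ 2 + y ^ 2 = 1 ∧
          v = ((1:ℝ) * x ^ 3 + 0 * x ^ 2 * y + (-1) * x * y ^ 2 + 0 * y ^ 3) ^ 2} :=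
        ⟨1, 0, by norm_num, by norm_num⟩
      have := le_csSup (hBdd 1 0 (-1) 0) h1
      linarith
  · -- the flat case
    have h5 : (Real.sqrt 5)^2 = 5 := Real.sq_sqrt (by norm_num)
    have hIv : I (3 * Real.sqrt 6 - 2) 0 (12 - 3 * Real.sqrt 6) (2 * Real.sqrt 5)
        = 27 - 3*Real.sqrt 6 := by
      rw [hIval]
      linear_combination (5/4)*h5 + (9/4)*h6
    have hrhs : (2 - 2 * Real.sqrt 6 / 9) * (27 - 3*Real.sqrt 6) = 58 - 12*Real.sqrt 6 := by
      linear_combination (2/3)*h6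
    rw [hIv, hrhs, hM]
    apply le_antisymm
    · apply Real.sSup_le
      · rintro w ⟨X, Y, hXY, rfl⟩
        have := pointwise_Fstar (Real.sqrt 5) (Real.sqrt 6) X Y h5 h6 h6u hXY
        calc ((3 * Real.sqrt 6 - 2) * X ^ 3 + 0 * X ^ 2 * Y
              + (12 - 3 * Real.sqrt 6) * X * Y ^ 2 + 2 * Real.sqrt 5 * Y ^ 3) ^ 2
            = ((3*Real.sqrt 6-2)*X^3 + (12-3*Real.sqrt 6)*X*Y^2 + 2*Real.sqrt 5*Y^3)^2 := by
              ring
          _ ≤ 58 - 12*Real.sqrt 6 := this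
      · linarith
    · have := hlb (3 * Real.sqrt 6 - 2) 0 (12 - 3 * Real.sqrt 6) (2 * Real.sqrt 5)
      rw [hIv, hrhs, hM] at this
      exact this
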